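/- For all nonzero integers m and all nonnegative integers n, the sum over k from 0 to n of ((256-m)k^3 - 128k^2 - 16k + 8) * C(2k,k)^2 * C(4k,2k) / ((2k-1)(4k-1) * m^k) equals 8(4n+1) * C(2n,n)^2 * C(4n,2n) / m^n. -/

import Mathlib

theorem stmt_4 (m : ℤ) (hm : m ≠ 0) (n : ℕ) :
    ∑ k ∈ Finset.range (n + 1),
      (((256 - (m : ℚ)) * k ^ 3 - 128 * k ^ 2 - 16 * k + 8) *
          ((2 * k).choose k : ℚ) ^ 2 * ((4 * k).choose (2 * k) : ℚ)) /
        ((2 * (k : ℚ) - 1) * (4 * (k : ℚ) - 1) * (m : ℚ) ^ k)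
      = 8 * (4 * (n : ℚ) + 1) * ((2 * n).choose n : ℚ) ^ 2 * ((4 * n).choose (2 * n) : ℚ) / (m : ℚ) ^ n := by
  induction n with
  | zero => norm_num
  | succ n ih =>
    rw [Finset.sum_range_succ, ih]
    have hm' : (m : ℚ) ≠ 0 := Int.cast_ne_zero.mpr hm
    have hpow : (m : ℚ) ^ n ≠ 0 := pow_ne_zero _ hm'
    have hn1 : ((n : ℚ) + 1) ≠ 0 := by positivity
    have h21 : (2 * (n : ℚ) + 1) ≠ 0 := by positivity
    have h43 : (4 * (n : ℚ) + 3) ≠ 0 := by positivity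
    have hd1 : (2 * ((n : ℚ) + 1) - 1) ≠ 0 := by
      intro h; apply h21; linarith
    have hd2 : (4 * ((n : ℚ) + 1) - 1) ≠ 0 := by
      intro h; apply h43; linarith
    -- recurrence for C(2(n+1), n+1)
    have hAnat : ((2 * (n + 1)).choose (n + 1)) * (n + 1)
        = 2 * (2 * n + 1) * ((2 * n).choose n) := by
      have h := Nat.succ_mul_centralBinom_succ n
      simp only [Nat.centralBinom] at h
      rw [mul_comm]
      convert h using 2
    -- recurrence for C(4(n+1), 2(n+1))
    have hBnat : ((4 * (n + 1)).choose (2 * (n + 1))) * ((2 * n + 2) * (2 * n + 1))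
        = 4 * (4 * n + 3) * (4 * n + 1) * ((4 * n).choose (2 * n)) := by
      have h1 := Nat.succ_mul_centralBinom_succ (2 * n + 1)
      have h2 := Nat.succ_mul_centralBinom_succ (2 * n)
      simp only [Nat.centralBinom] at h1 h2
      have e1 : 4 * (n + 1) = 2 * (2 * n + 1 + 1) := by ring
      have e2 : 2 * (n + 1) = 2 * n + 1 + 1 := by ring
      have e3 : 2 * (2 * n) = 4 * n := by ring
      rw [e1, e2]
      rw [e3] at h2
      calc (2 * (2 * n + 1 + 1)).choose (2 * n + 1 + 1) * ((2 * n + 2) * (2 * n + 1))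
          = (2 * n + 1 + 1) * ((2 * (2 * n + 1 + 1)).choose (2 * n + 1 + 1)) * (2 * n + 1) := by
            ring
        _ = 2 * (2 * (2 * n + 1) + 1) * ((2 * (2 * n + 1)).choose (2 * n + 1)) * (2 * n + 1) := by
            rw [h1]
        _ = 2 * (2 * (2 * n + 1) + 1) * ((2 * n + 1) * ((2 * (2 * n + 1)).choose (2 * n + 1))) := by
            ring
        _ = 2 * (2 * (2 * n + 1) + 1) * (2 * (4 * n + 1) * ((4 * n).choose (2 * n))) := by
            rw [h2]
        _ = 4 * (4 * n + 3) * (4 * n + 1) * ((4 * n).choose (2 * n)) := by ring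
    have hA : (((2 * (n + 1)).choose (n + 1) : ℕ) : ℚ)
        = 2 * (2 * (n : ℚ) + 1) * ((2 * n).choose n : ℚ) / ((n : ℚ) + 1) := by
      rw [eq_div_iff hn1]
      exact_mod_cast congrArg (Nat.cast : ℕ → ℚ) hAnat
    have hB : (((4 * (n + 1)).choose (2 * (n + 1)) : ℕ) : ℚ)
        = 4 * (4 * (n : ℚ) + 3) * (4 * (n : ℚ) + 1) * ((4 * n).choose (2 * n) : ℚ)
          / ((2 * (n : ℚ) + 2) * (2 * (n : ℚ) + 1)) := by
      have hden : ((2 * (n : ℚ) + 2) * (2 * (n : ℚ) + 1)) ≠ 0 := by positivity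
      rw [eq_div_iff hden]
      exact_mod_cast congrArg (Nat.cast : ℕ → ℚ) hBnat
    push_cast
    push_cast at hA hB
    rw [hA, hB]
    have hd1' : ((n : ℚ) + 1) * 2 - 1 ≠ 0 := by
      intro h; apply h21; linarith
    field_simp
    ring
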